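/- Varadhan's spectral radius characterization, lower-bound half (finite Markov case): for any stationary Markov distribution μ ∈ 𝓜(S×S) on a finite set S, any G : S×S → ℝ, and any stationary Markov distribution θ ⪯ μ, the growth rate ρ of the matrix [e^{G(i,j)} μ(j|i)] satisfies ρ([e^{G(i,j)} μ(j|i)]) ≥ ∑_{i,j} G(i,j) θ(i,j) − D̄(θ‖μ). -/

import Mathlib

open Finset Real Filter
open Classical

/-- Conditional transition probability of a Markov edge-measure (0 off support,
using Lean's convention 0/0 = 0). -/
noncomputable def condProb {d : ℕ} (μ : Fin d → Fin d → ℝ) (i j : Fin d) : ℝ :=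
  μ i j / ∑ k, μ i k

/-- Jensen's inequality for the logarithm, in weighted-sum form. -/
lemma log_jensen {ι : Type*} (s : Finset ι) (w z : ι → ℝ)
    (hw : ∀ i ∈ s, 0 < w i) (hw1 : ∑ i ∈ s, w i = 1)
    (hz : ∀ i ∈ s, 0 < z i) :
    ∑ i ∈ s, w i * Real.log (z i) ≤ Real.log (∑ i ∈ s, w i * z i) := by
  have hprod : (0:ℝ) < ∏ i ∈ s, z i ^ w i :=
    Finset.prod_pos fun i hi => Real.rpow_pos_of_pos (hz i hi) _
  have hle := Real.geom_mean_le_arith_mean_weighted s w z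
    (fun i hi => (hw i hi).le) hw1 (fun i hi => (hz i hi).le)
  calc ∑ i ∈ s, w i * Real.log (z i)
      = Real.log (∏ i ∈ s, z i ^ w i) := by
        rw [Real.log_prod (fun i hi => (Real.rpow_pos_of_pos (hz i hi) _).ne')]
        exact (Finset.sum_congr rfl fun i hi => (Real.log_rpow (hz i hi) _)).symm
    _ ≤ _ := Real.log_le_log hprod hle

/-- Varadhan's spectral radius characterization, lower-bound half (finite Markov
case): the growth rate ρ of [e^{G(i,j)} μ(j|i)] satisfies
ρ ≥ ∑ G(i,j) θ(i,j) - D̄(θ‖μ) for every stationary Markov θ ⪯ μ. -/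
theorem varadhan_lower_bound {d : ℕ} (μ θ : Fin d → Fin d → ℝ)
    (G : Fin d → Fin d → ℝ)
    (hμ0 : ∀ i j, 0 ≤ μ i j) (hμ1 : ∑ i, ∑ j, μ i j = 1)
    (hμstat : ∀ k, ∑ j, μ k j = ∑ i, μ i k)
    (hθ0 : ∀ i j, 0 ≤ θ i j) (hθ1 : ∑ i, ∑ j, θ i j = 1)
    (hθstat : ∀ k, ∑ j, θ k j = ∑ i, θ i k)
    (habs : ∀ i j, μ i j = 0 → θ i j = 0)
    (ρ : ℝ)
    (hρ : Filter.Tendsto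
      (fun n : ℕ => (1 / (n : ℝ)) *
        Real.log (∑ i, ∑ j,
          ((Matrix.of fun i j => Real.exp (G i j) * condProb μ i j) ^ n) i j))
      Filter.atTop (nhds ρ)) :
    ρ ≥ ∑ i, ∑ j, G i j * θ i j -
      ∑ i, ∑ j ∈ Finset.univ.filter (fun j => 0 < θ i j),
        θ i j * Real.log (condProb θ i j / condProb μ i j) := by
  set M : Matrix (Fin d) (Fin d) ℝ :=
    Matrix.of (fun i j => Real.exp (G i j) * condProb μ i j) with hMdef
  set c : ℝ := ∑ i, ∑ j, G i j * θ i j -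
      ∑ i, ∑ j ∈ Finset.univ.filter (fun j => 0 < θ i j),
        θ i j * Real.log (condProb θ i j / condProb μ i j) with hcdef
  -- row sums of θ
  set pp : Fin d → ℝ := fun i => ∑ j, θ i j with hppdef
  have hpp0 : ∀ i, 0 ≤ pp i := fun i => Finset.sum_nonneg fun j _ => hθ0 i j
  have hpp1 : ∑ i, pp i = 1 := hθ1
  have hpple1 : ∀ i, pp i ≤ 1 := by
    intro i
    rw [← hpp1]
    exact Finset.single_le_sum (fun k _ => hpp0 k) (Finset.mem_univ i)
  have hppstat : ∀ k, pp k = ∑ i, θ i k := fun k => hθstat k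
  -- positivity facts
  have hθμ : ∀ i j, 0 < θ i j → 0 < μ i j := by
    intro i j h
    rcases (hμ0 i j).lt_or_eq with h' | h'
    · exact h'
    · exact absurd (habs i j h'.symm) (ne_of_gt h)
  have hμrow : ∀ i j, 0 < θ i j → 0 < ∑ k, μ i k := by
    intro i j h
    exact lt_of_lt_of_le (hθμ i j h)
      (Finset.single_le_sum (fun k _ => hμ0 i k) (Finset.mem_univ j))
  have hcpμ : ∀ i j, 0 < θ i j → 0 < condProb μ i j := by
    intro i j h
    exact div_pos (hθμ i j h) (hμrow i j h)
  have hMpos : ∀ i j, 0 < θ i j → 0 < M i j := by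
    intro i j h
    exact mul_pos (Real.exp_pos _) (hcpμ i j h)
  have hM0 : ∀ i j, 0 ≤ M i j := by
    intro i j
    exact mul_nonneg (Real.exp_pos _).le
      (div_nonneg (hμ0 i j) (Finset.sum_nonneg fun k _ => hμ0 i k))
  have hppposi : ∀ i j, 0 < θ i j → 0 < pp i := by
    intro i j h
    exact lt_of_lt_of_le h
      (Finset.single_le_sum (fun k _ => hθ0 i k) (Finset.mem_univ j))
  have hppposj : ∀ i j, 0 < θ i j → 0 < pp j := by
    intro i j h
    rw [hppstat j]
    exact lt_of_lt_of_le h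
      (Finset.single_le_sum (fun k _ => hθ0 k j) (Finset.mem_univ i))
  have hcpθ : ∀ i j, 0 < θ i j → 0 < condProb θ i j :=
    fun i j h => div_pos h (hppposi i j h)
  -- the θ-support of a row, and the conditional probabilities sum to 1 there
  have hrowsum : ∀ i, ∑ j ∈ Finset.univ.filter (fun j => 0 < θ i j), θ i j = pp i := by
    intro i
    rw [hppdef]
    refine Finset.sum_subset (Finset.filter_subset _ _) ?_
    intro j _ hj
    simp only [Finset.mem_filter, Finset.mem_univ, true_and, not_lt] at hj
    exact le_antisymm hj (hθ0 i j)
  have hcpsum : ∀ i, 0 < pp i →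
      ∑ j ∈ Finset.univ.filter (fun j => 0 < θ i j), condProb θ i j = 1 := by
    intro i hi
    have : ∀ j, condProb θ i j = θ i j / pp i := fun j => rfl
    simp only [this, ← Finset.sum_div, hrowsum i, div_self hi.ne']
  -- row sums of powers of M
  set u : ℕ → Fin d → ℝ := fun n i => ∑ j, (M ^ n) i j with hudef
  have hu0 : ∀ i, u 0 i = 1 := by
    intro i
    simp [hudef, Matrix.one_apply]
  have husucc : ∀ n i, u (n + 1) i = ∑ k, M i k * u n k := by
    intro n i
    simp only [hudef, pow_succ', Matrix.mul_apply]
    rw [Finset.sum_comm]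
    exact Finset.sum_congr rfl fun k _ => by rw [Finset.mul_sum]
  have hualln : ∀ n i, 0 ≤ u n i := by
    intro n
    induction n with
    | zero => intro i; rw [hu0 i]; norm_num
    | succ n ih =>
        intro i
        rw [husucc n i]
        exact Finset.sum_nonneg fun k _ => mul_nonneg (hM0 i k) (ih k)
  have hupos : ∀ n i, 0 < pp i → 0 < u n i := by
    intro n
    induction n with
    | zero => intro i _; rw [hu0 i]; norm_num
    | succ n ih =>
        intro i hi
        obtain ⟨j, hj⟩ : ∃ j, 0 < θ i j := by
          by_contra h
          push_neg at h
          have : pp i = 0 := Finset.sum_eq_zero fun j _ => le_antisymm (h j) (hθ0 i j)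
          exact absurd this hi.ne'
        rw [husucc n i]
        refine Finset.sum_pos' (fun k _ => mul_nonneg (hM0 i k) (hualln n k)) ?_
        exact ⟨j, Finset.mem_univ j, mul_pos (hMpos i j hj) (ih j (hppposj i j hj))⟩
  -- the entropy functional
  set A : ℕ → ℝ := fun n => ∑ i, pp i * Real.log (u n i) with hAdef
  have hA0 : A 0 = 0 := by
    simp [hAdef, hu0]
  -- one step of the Donsker–Varadhan / Jensen argument
  have key : ∀ n, A n + c ≤ A (n + 1) := by
    intro n
    -- per-row lower bound
    set B : Fin d → ℝ := fun i =>
      ∑ j ∈ Finset.univ.filter (fun j => 0 < θ i j),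
        θ i j * (G i j + Real.log (condProb μ i j) + Real.log (u n j)
          - Real.log (condProb θ i j)) with hBdef
    have hrow : ∀ i, B i ≤ pp i * Real.log (u (n + 1) i) := by
      intro i
      rcases (hpp0 i).lt_or_eq with hi | hi
      · -- pp i > 0
        set t := Finset.univ.filter (fun j => 0 < θ i j) with htdef
        have hmem : ∀ j ∈ t, 0 < θ i j := by
          intro j hj
          simpa [htdef] using hj
        have hwpos : ∀ j ∈ t, 0 < condProb θ i j := fun j hj => hcpθ i j (hmem j hj)
        have hzpos : ∀ j ∈ t, 0 < M i j * u n j / condProb θ i j := by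
          intro j hj
          exact div_pos (mul_pos (hMpos i j (hmem j hj))
            (hupos n j (hppposj i j (hmem j hj)))) (hwpos j hj)
        have hjen := log_jensen t (fun j => condProb θ i j)
          (fun j => M i j * u n j / condProb θ i j) hwpos (hcpsum i hi) hzpos
        -- simplify rhs of jensen
        have hsum_eq : ∑ j ∈ t, condProb θ i j * (M i j * u n j / condProb θ i j)
            = ∑ j ∈ t, M i j * u n j := by
          refine Finset.sum_congr rfl fun j hj => ?_
          rw [mul_comm, div_mul_cancel₀ _ (hwpos j hj).ne']
        have hsum_le : ∑ j ∈ t, M i j * u n j ≤ u (n + 1) i := by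
          rw [husucc n i]
          refine Finset.sum_le_sum_of_subset_of_nonneg (Finset.filter_subset _ _) ?_
          intro k _ _
          exact mul_nonneg (hM0 i k) (hualln n k)
        have htne : t.Nonempty := by
          by_contra h
          rw [Finset.not_nonempty_iff_eq_empty] at h
          have : pp i = 0 := by
            rw [← hrowsum i, ← htdef, h, Finset.sum_empty]
          exact absurd this hi.ne'
        have hsum_pos : 0 < ∑ j ∈ t, M i j * u n j := by
          obtain ⟨j, hj⟩ := htne
          refine Finset.sum_pos' (fun k hk => mul_nonneg (hM0 i k) (hualln n k)) ?_
          exact ⟨j, hj, mul_pos (hMpos i j (hmem j hj))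
            (hupos n j (hppposj i j (hmem j hj)))⟩
        have hlog_le : Real.log (∑ j ∈ t, M i j * u n j) ≤ Real.log (u (n + 1) i) :=
          Real.log_le_log hsum_pos hsum_le
        have hjen' : ∑ j ∈ t, condProb θ i j *
            Real.log (M i j * u n j / condProb θ i j) ≤ Real.log (u (n + 1) i) := by
          calc _ ≤ Real.log (∑ j ∈ t, condProb θ i j * (M i j * u n j / condProb θ i j)) :=
                hjen
            _ = Real.log (∑ j ∈ t, M i j * u n j) := by rw [hsum_eq]
            _ ≤ _ := hlog_le
        -- expand the logarithm inside
        have hlogz : ∀ j ∈ t, Real.log (M i j * u n j / condProb θ i j)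
            = G i j + Real.log (condProb μ i j) + Real.log (u n j)
              - Real.log (condProb θ i j) := by
          intro j hj
          have h1 : (0:ℝ) < Real.exp (G i j) := Real.exp_pos _
          have h2 : 0 < condProb μ i j := hcpμ i j (hmem j hj)
          have h3 : 0 < u n j := hupos n j (hppposj i j (hmem j hj))
          have hMeq : M i j = Real.exp (G i j) * condProb μ i j := rfl
          have h4 : 0 < M i j := hMpos i j (hmem j hj)
          rw [Real.log_div (mul_pos h4 h3).ne' (hwpos j hj).ne', hMeq,
            Real.log_mul (mul_pos h1 h2).ne' h3.ne',
            Real.log_mul h1.ne' h2.ne', Real.log_exp]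
        have hBle : B i ≤ pp i * Real.log (u (n + 1) i) := by
          have hmul := mul_le_mul_of_nonneg_left hjen' (hpp0 i)
          calc B i = pp i * ∑ j ∈ t, condProb θ i j *
                Real.log (M i j * u n j / condProb θ i j) := by
                rw [hBdef, Finset.mul_sum]
                refine Finset.sum_congr rfl fun j hj => ?_
                rw [hlogz j hj, ← mul_assoc]
                congr 1
                have : condProb θ i j = θ i j / pp i := rfl
                rw [this, mul_div_cancel₀ _ hi.ne']
            _ ≤ _ := hmul
        exact hBle
      · -- pp i = 0
        have hθz : ∀ j, θ i j = 0 := by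
          intro j
          have := (Finset.sum_eq_zero_iff_of_nonneg
            (fun j _ => hθ0 i j)).mp hi.symm
          exact this j (Finset.mem_univ j)
        have hBz : B i = 0 := by
          rw [hBdef]
          refine Finset.sum_eq_zero fun j hj => ?_
          rw [hθz j, zero_mul]
        rw [hBz, ← hi, zero_mul]
    -- sum the per-row bounds
    have hsumB : ∑ i, B i ≤ A (n + 1) := Finset.sum_le_sum fun i _ => hrow i
    -- identify ∑ B with A n + c
    have hBsum_eq : ∑ i, B i = A n + c := by
      have hexp : ∀ i, B i =
          (∑ j ∈ Finset.univ.filter (fun j => 0 < θ i j), θ i j * G i j)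
          + (∑ j ∈ Finset.univ.filter (fun j => 0 < θ i j), θ i j * Real.log (u n j))
          - (∑ j ∈ Finset.univ.filter (fun j => 0 < θ i j),
              θ i j * Real.log (condProb θ i j / condProb μ i j)) := by
        intro i
        rw [hBdef, ← Finset.sum_add_distrib, ← Finset.sum_sub_distrib]
        refine Finset.sum_congr rfl fun j hj => ?_
        have hjpos : 0 < θ i j := by simpa using hj
        rw [Real.log_div (hcpθ i j hjpos).ne' (hcpμ i j hjpos).ne']
        ring
      -- each of the three pieces
      have h1 : ∀ i, ∑ j ∈ Finset.univ.filter (fun j => 0 < θ i j), θ i j * G i j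
          = ∑ j, G i j * θ i j := by
        intro i
        rw [Finset.sum_filter]
        refine Finset.sum_congr rfl fun j _ => ?_
        by_cases h : 0 < θ i j
        · simp [h, mul_comm]
        · have : θ i j = 0 := le_antisymm (not_lt.mp h) (hθ0 i j)
          simp [h, this]
      have h2 : ∀ i, ∑ j ∈ Finset.univ.filter (fun j => 0 < θ i j),
          θ i j * Real.log (u n j) = ∑ j, θ i j * Real.log (u n j) := by
        intro i
        rw [Finset.sum_filter]
        refine Finset.sum_congr rfl fun j _ => ?_
        by_cases h : 0 < θ i j
        · simp [h]
        · have : θ i j = 0 := le_antisymm (not_lt.mp h) (hθ0 i j)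
          simp [h, this]
      have h3 : ∑ i, ∑ j, θ i j * Real.log (u n j) = A n := by
        rw [Finset.sum_comm, hAdef]
        refine Finset.sum_congr rfl fun j _ => ?_
        rw [← Finset.sum_mul, ← hppstat j]
      calc ∑ i, B i
          = (∑ i, ∑ j, G i j * θ i j) + (∑ i, ∑ j, θ i j * Real.log (u n j))
            - ∑ i, ∑ j ∈ Finset.univ.filter (fun j => 0 < θ i j),
                θ i j * Real.log (condProb θ i j / condProb μ i j) := by
            rw [show (∑ i, B i) = ∑ i, ((∑ j, G i j * θ i j)
                + (∑ j, θ i j * Real.log (u n j))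
                - ∑ j ∈ Finset.univ.filter (fun j => 0 < θ i j),
                    θ i j * Real.log (condProb θ i j / condProb μ i j)) from
              Finset.sum_congr rfl fun i _ => by rw [hexp i, h1 i, h2 i]]
            rw [Finset.sum_sub_distrib, Finset.sum_add_distrib]
        _ = A n + c := by rw [h3, hcdef]; ring
    linarith [hsumB, hBsum_eq.ge]
  -- A n ≥ n * c
  have hAn : ∀ n : ℕ, (n : ℝ) * c ≤ A n := by
    intro n
    induction n with
    | zero => simp [hA0]
    | succ n ih =>
        have := key n
        push_cast
        linarith
  -- log of total sum dominates A n
  have hlogS : ∀ n : ℕ, A n ≤ Real.log (∑ i, u n i) := by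
    intro n
    set s := Finset.univ.filter (fun i => 0 < pp i) with hsdef
    have hmem : ∀ i ∈ s, 0 < pp i := by
      intro i hi; simpa [hsdef] using hi
    have hssum : ∑ i ∈ s, pp i = 1 := by
      rw [← hpp1]
      refine Finset.sum_subset (Finset.filter_subset _ _) ?_
      intro i _ hi
      simp only [hsdef, Finset.mem_filter, Finset.mem_univ, true_and, not_lt] at hi
      exact le_antisymm hi (hpp0 i)
    have hjen := log_jensen s pp (u n) hmem hssum (fun i hi => hupos n i (hmem i hi))
    have hAeq : A n = ∑ i ∈ s, pp i * Real.log (u n i) := by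
      rw [hAdef]
      refine (Finset.sum_subset (Finset.filter_subset _ _) ?_).symm
      intro i _ hi
      simp only [hsdef, Finset.mem_filter, Finset.mem_univ, true_and, not_lt] at hi
      have : pp i = 0 := le_antisymm hi (hpp0 i)
      rw [this, zero_mul]
    have hle1 : ∑ i ∈ s, pp i * u n i ≤ ∑ i, u n i := by
      calc ∑ i ∈ s, pp i * u n i ≤ ∑ i ∈ s, u n i := by
            refine Finset.sum_le_sum fun i hi => ?_
            calc pp i * u n i ≤ 1 * u n i :=
                  mul_le_mul_of_nonneg_right (hpple1 i) (hualln n i)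
              _ = u n i := one_mul _
        _ ≤ ∑ i, u n i :=
            Finset.sum_le_sum_of_subset_of_nonneg (Finset.filter_subset _ _)
              (fun i _ _ => hualln n i)
    have hspos : 0 < ∑ i ∈ s, pp i * u n i := by
      have hsne : s.Nonempty := by
        by_contra h
        rw [Finset.not_nonempty_iff_eq_empty] at h
        rw [h, Finset.sum_empty] at hssum
        norm_num at hssum
      obtain ⟨i, hi⟩ := hsne
      refine Finset.sum_pos' (fun k hk => mul_nonneg (hpp0 k) (hualln n k)) ?_
      exact ⟨i, hi, mul_pos (hmem i hi) (hupos n i (hmem i hi))⟩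
    calc A n = ∑ i ∈ s, pp i * Real.log (u n i) := hAeq
      _ ≤ Real.log (∑ i ∈ s, pp i * u n i) := hjen
      _ ≤ Real.log (∑ i, u n i) := Real.log_le_log hspos hle1
  -- pass to the limit
  have hev : ∀ᶠ n : ℕ in Filter.atTop,
      c ≤ (1 / (n : ℝ)) * Real.log (∑ i, ∑ j, (M ^ n) i j) := by
    filter_upwards [Filter.eventually_ge_atTop 1] with n hn
    have hnpos : (0:ℝ) < (n : ℝ) := by exact_mod_cast hn
    have hlog : (n : ℝ) * c ≤ Real.log (∑ i, ∑ j, (M ^ n) i j) := by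
      calc (n : ℝ) * c ≤ A n := hAn n
        _ ≤ Real.log (∑ i, u n i) := hlogS n
        _ = Real.log (∑ i, ∑ j, (M ^ n) i j) := rfl
    calc c = (1 / (n : ℝ)) * ((n : ℝ) * c) := by
          field_simp
      _ ≤ (1 / (n : ℝ)) * Real.log (∑ i, ∑ j, (M ^ n) i j) :=
          mul_le_mul_of_nonneg_left hlog (by positivity)
  exact ge_of_tendsto hρ hev
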